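/- arXiv:1001.4461 — 9 statements merged into one kernel-verified Lean document; each statement's English description precedes it below -/
import Mathlib

section
/- For every real κ > 0, the function u_κ(θ) = sin θ · (cos θ + √(cos²θ + κ²)) is differentiable on ℝ and satisfies, for all θ, the identity u_κ′(θ) · sin θ · √(cos²θ + κ²) = u_κ(θ) · cos 2θ + (κ²/2) · sin 2θ. (That is, along the flow θ̇ = sin θ √(cos²θ + κ²), the multiplier λ_θ = u_κ(θ) satisfies the adjoint equation λ̇_θ = λ_θ cos 2θ + λ_a sin 2θ with λ_a = κ²/2.) -/
theorem stmt_1 (κ : ℝ) (hκ : 0 < κ) :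
    Differentiable ℝ
      (fun θ : ℝ => Real.sin θ * (Real.cos θ + Real.sqrt (Real.cos θ ^ 2 + κ ^ 2))) ∧
    ∀ θ : ℝ,
      deriv (fun θ : ℝ => Real.sin θ * (Real.cos θ + Real.sqrt (Real.cos θ ^ 2 + κ ^ 2))) θ
          * (Real.sin θ * Real.sqrt (Real.cos θ ^ 2 + κ ^ 2))
        = Real.sin θ * (Real.cos θ + Real.sqrt (Real.cos θ ^ 2 + κ ^ 2)) * Real.cos (2 * θ)
          + κ ^ 2 / 2 * Real.sin (2 * θ) := by
  have hpos : ∀ θ : ℝ, 0 < Real.cos θ ^ 2 + κ ^ 2 := fun θ => by positivity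
  have hderiv : ∀ θ : ℝ,
      HasDerivAt (fun θ : ℝ => Real.sin θ * (Real.cos θ + Real.sqrt (Real.cos θ ^ 2 + κ ^ 2)))
        (Real.cos θ * (Real.cos θ + Real.sqrt (Real.cos θ ^ 2 + κ ^ 2)) +
          Real.sin θ * (-Real.sin θ +
            (2 * Real.cos θ * -Real.sin θ) / (2 * Real.sqrt (Real.cos θ ^ 2 + κ ^ 2)))) θ := by
    intro θ
    have h1 : HasDerivAt (fun θ : ℝ => Real.cos θ ^ 2 + κ ^ 2)
        (2 * Real.cos θ * -Real.sin θ) θ := by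
      have := (((Real.hasDerivAt_cos θ).pow 2).add_const (κ ^ 2))
      simpa [mul_comm, mul_assoc, mul_left_comm] using this
    have h2 := h1.sqrt (ne_of_gt (hpos θ))
    exact (Real.hasDerivAt_sin θ).mul ((Real.hasDerivAt_cos θ).add h2)
  refine ⟨fun θ => (hderiv θ).differentiableAt, fun θ => ?_⟩
  rw [(hderiv θ).deriv, Real.cos_two_mul', Real.sin_two_mul]
  have hR0 : 0 < Real.sqrt (Real.cos θ ^ 2 + κ ^ 2) := Real.sqrt_pos.2 (hpos θ)
  have hR2 : Real.sqrt (Real.cos θ ^ 2 + κ ^ 2) ^ 2 = Real.cos θ ^ 2 + κ ^ 2 :=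
    Real.sq_sqrt (hpos θ).le
  set R := Real.sqrt (Real.cos θ ^ 2 + κ ^ 2)
  field_simp
  linear_combination (Real.sin θ * Real.cos θ) * hR2
end

section
/- For every real κ > 0, the function r_κ(θ) = (cos θ + √(cos²θ + κ²)) / (1 + √(1 + κ²)) is positive and differentiable on ℝ, satisfies r_κ(0) = 1, and satisfies the logarithmic-derivative identity r_κ′(θ)/r_κ(θ) = −sin θ / √(cos²θ + κ²) for all θ. (Thus a = ln r_κ solves da/dθ = −sin θ / √(cos²θ + κ²) with a(0) = 0.) -/
open Real

lemma spos (κ θ : ℝ) (hκ : 0 < κ) : 0 < Real.sqrt (Real.cos θ ^ 2 + κ ^ 2) :=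
  Real.sqrt_pos.2 (by positivity)

lemma sgt (κ θ : ℝ) (hκ : 0 < κ) : |Real.cos θ| < Real.sqrt (Real.cos θ ^ 2 + κ ^ 2) := by
  have : Real.cos θ ^ 2 < Real.cos θ ^ 2 + κ ^ 2 := by nlinarith
  calc |Real.cos θ| = Real.sqrt (Real.cos θ ^ 2) := by
        rw [Real.sqrt_sq_eq_abs]
    _ < _ := Real.sqrt_lt_sqrt (sq_nonneg _) this

lemma numpos (κ θ : ℝ) (hκ : 0 < κ) :
    0 < Real.cos θ + Real.sqrt (Real.cos θ ^ 2 + κ ^ 2) := by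
  have := sgt κ θ hκ
  have := neg_abs_le (Real.cos θ)
  linarith

lemma keyderiv (κ θ : ℝ) (hκ : 0 < κ) :
    HasDerivAt (fun θ : ℝ => Real.cos θ + Real.sqrt (Real.cos θ ^ 2 + κ ^ 2))
      (-Real.sin θ * (Real.cos θ + Real.sqrt (Real.cos θ ^ 2 + κ ^ 2))
        / Real.sqrt (Real.cos θ ^ 2 + κ ^ 2)) θ := by
  have hs := spos κ θ hκ
  have h1 : HasDerivAt (fun θ : ℝ => Real.cos θ ^ 2 + κ ^ 2)
      (2 * Real.cos θ * (-Real.sin θ)) θ := by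
    have := ((Real.hasDerivAt_cos θ).pow 2).add_const (κ ^ 2)
    simpa [mul_comm, mul_assoc, mul_left_comm] using this
  have h2 : HasDerivAt (fun θ : ℝ => Real.sqrt (Real.cos θ ^ 2 + κ ^ 2))
      (2 * Real.cos θ * (-Real.sin θ) / (2 * Real.sqrt (Real.cos θ ^ 2 + κ ^ 2))) θ :=
    h1.sqrt (by positivity)
  have h3 : HasDerivAt (fun θ : ℝ => Real.cos θ + Real.sqrt (Real.cos θ ^ 2 + κ ^ 2)) _ θ :=
    (Real.hasDerivAt_cos θ).add h2
  convert h3 using 1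
  have hs' : Real.sqrt (Real.cos θ ^ 2 + κ ^ 2) ≠ 0 := ne_of_gt hs
  have hsq : Real.sqrt (Real.cos θ ^ 2 + κ ^ 2) ^ 2 = Real.cos θ ^ 2 + κ ^ 2 :=
    Real.sq_sqrt (by positivity)
  field_simp
  ring

theorem stmt_2 (κ : ℝ) (hκ : 0 < κ) :
    (∀ θ : ℝ, 0 < (Real.cos θ + Real.sqrt (Real.cos θ ^ 2 + κ ^ 2))
        / (1 + Real.sqrt (1 + κ ^ 2))) ∧
    Differentiable ℝ
      (fun θ : ℝ => (Real.cos θ + Real.sqrt (Real.cos θ ^ 2 + κ ^ 2))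
        / (1 + Real.sqrt (1 + κ ^ 2))) ∧
    (Real.cos 0 + Real.sqrt (Real.cos (0 : ℝ) ^ 2 + κ ^ 2)) / (1 + Real.sqrt (1 + κ ^ 2)) = 1 ∧
    ∀ θ : ℝ,
      deriv (fun θ : ℝ => (Real.cos θ + Real.sqrt (Real.cos θ ^ 2 + κ ^ 2))
          / (1 + Real.sqrt (1 + κ ^ 2))) θ
        / ((Real.cos θ + Real.sqrt (Real.cos θ ^ 2 + κ ^ 2)) / (1 + Real.sqrt (1 + κ ^ 2)))
      = -Real.sin θ / Real.sqrt (Real.cos θ ^ 2 + κ ^ 2) := by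
  have hC : (0:ℝ) < 1 + Real.sqrt (1 + κ ^ 2) := by
    have := Real.sqrt_nonneg (1 + κ ^ 2); linarith
  have hC' : (1 + Real.sqrt (1 + κ ^ 2)) ≠ 0 := ne_of_gt hC
  have hD : ∀ θ : ℝ, HasDerivAt
      (fun θ : ℝ => (Real.cos θ + Real.sqrt (Real.cos θ ^ 2 + κ ^ 2))
        / (1 + Real.sqrt (1 + κ ^ 2)))
      (-Real.sin θ * (Real.cos θ + Real.sqrt (Real.cos θ ^ 2 + κ ^ 2))
        / Real.sqrt (Real.cos θ ^ 2 + κ ^ 2) / (1 + Real.sqrt (1 + κ ^ 2))) θ :=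
    fun θ => (keyderiv κ θ hκ).div_const _
  refine ⟨fun θ => div_pos (numpos κ θ hκ) hC, fun θ => (hD θ).differentiableAt, ?_, ?_⟩
  · rw [Real.cos_zero]
    rw [show (1:ℝ) ^ 2 + κ ^ 2 = 1 + κ ^ 2 by ring]
    field_simp
  · intro θ
    rw [(hD θ).deriv]
    have hs := spos κ θ hκ
    have hn := numpos κ θ hκ
    field_simp
end

section
/- For every real κ > 0, the definite integral ∫₀^π sin θ · (cos θ + √(cos²θ + κ²))² / (2·√(cos²θ + κ²)) dθ equals √(1 + κ²). Consequently, if κ = 2√(r)/(1 − r) with 0 < r < 1, the integral equals (1 + r)/(1 − r). -/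
theorem stmt_5 (κ : ℝ) (hκ : 0 < κ) :
    (∫ θ in (0:ℝ)..Real.pi,
        Real.sin θ * (Real.cos θ + Real.sqrt (Real.cos θ ^ 2 + κ ^ 2)) ^ 2
          / (2 * Real.sqrt (Real.cos θ ^ 2 + κ ^ 2)))
      = Real.sqrt (1 + κ ^ 2) ∧
    ∀ r : ℝ, 0 < r → r < 1 → κ = 2 * Real.sqrt r / (1 - r) →
      (∫ θ in (0:ℝ)..Real.pi,
          Real.sin θ * (Real.cos θ + Real.sqrt (Real.cos θ ^ 2 + κ ^ 2)) ^ 2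
            / (2 * Real.sqrt (Real.cos θ ^ 2 + κ ^ 2)))
        = (1 + r) / (1 - r) := by
  have hpos : ∀ θ : ℝ, 0 < Real.cos θ ^ 2 + κ ^ 2 := fun θ => by positivity
  have hqpos : ∀ θ : ℝ, 0 < Real.sqrt (Real.cos θ ^ 2 + κ ^ 2) := fun θ =>
    Real.sqrt_pos.mpr (hpos θ)
  have hsq : ∀ θ : ℝ, Real.sqrt (Real.cos θ ^ 2 + κ ^ 2) ^ 2 = Real.cos θ ^ 2 + κ ^ 2 :=
    fun θ => Real.sq_sqrt (hpos θ).le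
  set G : ℝ → ℝ := fun θ =>
    -(Real.cos θ * (Real.sqrt (Real.cos θ ^ 2 + κ ^ 2) + Real.cos θ)) / 2 with hG
  have hderiv : ∀ θ : ℝ, HasDerivAt G
      (Real.sin θ * (Real.cos θ + Real.sqrt (Real.cos θ ^ 2 + κ ^ 2)) ^ 2
        / (2 * Real.sqrt (Real.cos θ ^ 2 + κ ^ 2))) θ := by
    intro θ
    have hc : HasDerivAt Real.cos (-Real.sin θ) θ := Real.hasDerivAt_cos θ
    have hin : HasDerivAt (fun θ => Real.cos θ ^ 2 + κ ^ 2)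
        (2 * Real.cos θ * (-Real.sin θ)) θ := by
      simpa using ((hc.pow 2).add_const (κ ^ 2))
    have hq : HasDerivAt (fun θ => Real.sqrt (Real.cos θ ^ 2 + κ ^ 2))
        (2 * Real.cos θ * (-Real.sin θ) / (2 * Real.sqrt (Real.cos θ ^ 2 + κ ^ 2))) θ := by
      have := (Real.hasDerivAt_sqrt (ne_of_gt (hpos θ))).comp θ hin
      simpa [Function.comp_def, div_eq_inv_mul, mul_comm] using this
    have hGd : HasDerivAt G
        (-((-Real.sin θ) * (Real.sqrt (Real.cos θ ^ 2 + κ ^ 2) + Real.cos θ) +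
           Real.cos θ * (2 * Real.cos θ * (-Real.sin θ) /
             (2 * Real.sqrt (Real.cos θ ^ 2 + κ ^ 2)) + (-Real.sin θ))) / 2) θ := by
      exact ((hc.mul (hq.add hc)).neg.div_const 2)
    convert hGd using 1
    have hq0 : Real.sqrt (Real.cos θ ^ 2 + κ ^ 2) ≠ 0 := ne_of_gt (hqpos θ)
    field_simp
    nlinarith [hsq θ, Real.sin_sq_add_cos_sq θ]
  have hcont : Continuous fun θ : ℝ =>
      Real.sin θ * (Real.cos θ + Real.sqrt (Real.cos θ ^ 2 + κ ^ 2)) ^ 2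
        / (2 * Real.sqrt (Real.cos θ ^ 2 + κ ^ 2)) := by
    apply Continuous.div
    · continuity
    · continuity
    · intro θ
      exact ne_of_gt (by positivity)
  have hint : (∫ θ in (0:ℝ)..Real.pi,
      Real.sin θ * (Real.cos θ + Real.sqrt (Real.cos θ ^ 2 + κ ^ 2)) ^ 2
        / (2 * Real.sqrt (Real.cos θ ^ 2 + κ ^ 2))) = G Real.pi - G 0 := by
    exact intervalIntegral.integral_eq_sub_of_hasDerivAt (fun θ _ => hderiv θ)
      (hcont.intervalIntegrable 0 Real.pi)
  have hval : G Real.pi - G 0 = Real.sqrt (1 + κ ^ 2) := by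
    simp only [hG, Real.cos_pi, Real.cos_zero]
    norm_num
    ring
  have hmain := hint.trans hval
  refine ⟨hmain, ?_⟩
  intro r hr hr1 hκr
  rw [hmain]
  have h1r : (0:ℝ) < 1 - r := by linarith
  have hsr : Real.sqrt r ^ 2 = r := Real.sq_sqrt hr.le
  have hκ2 : κ ^ 2 = 4 * r / (1 - r) ^ 2 := by
    rw [hκr]
    field_simp
    nlinarith [hsr]
  have : 1 + κ ^ 2 = ((1 + r) / (1 - r)) ^ 2 := by
    rw [hκ2]
    field_simp
    ring
  rw [this, Real.sqrt_sq (by positivity)]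
end

section
/- For every real κ > 0, the definite integral ∫₀^{π/2} sin θ · (cos θ + √(cos²θ + κ²))² / (2·√(cos²θ + κ²)) dθ equals (1 + √(1 + κ²))/2. Consequently, if κ = 2r/(1 − r²) with 0 < r < 1, the integral equals 1/(1 − r²). -/
theorem stmt_6 (κ : ℝ) (hκ : 0 < κ) :
    (∫ θ in (0:ℝ)..(Real.pi / 2),
        Real.sin θ * (Real.cos θ + Real.sqrt (Real.cos θ ^ 2 + κ ^ 2)) ^ 2
          / (2 * Real.sqrt (Real.cos θ ^ 2 + κ ^ 2)))
      = (1 + Real.sqrt (1 + κ ^ 2)) / 2 ∧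
    ∀ r : ℝ, 0 < r → r < 1 → κ = 2 * r / (1 - r ^ 2) →
      (∫ θ in (0:ℝ)..(Real.pi / 2),
          Real.sin θ * (Real.cos θ + Real.sqrt (Real.cos θ ^ 2 + κ ^ 2)) ^ 2
            / (2 * Real.sqrt (Real.cos θ ^ 2 + κ ^ 2)))
        = 1 / (1 - r ^ 2) := by
  have hpos : ∀ θ : ℝ, 0 < Real.cos θ ^ 2 + κ ^ 2 := fun θ => by positivity
  set F : ℝ → ℝ := fun θ =>
    -(Real.cos θ * Real.sqrt (Real.cos θ ^ 2 + κ ^ 2) / 2) - Real.cos θ ^ 2 / 2 with hF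
  have hderiv : ∀ θ ∈ Set.uIcc (0:ℝ) (Real.pi / 2),
      HasDerivAt F (Real.sin θ * (Real.cos θ + Real.sqrt (Real.cos θ ^ 2 + κ ^ 2)) ^ 2
        / (2 * Real.sqrt (Real.cos θ ^ 2 + κ ^ 2))) θ := by
    intro θ _
    have h1 : HasDerivAt Real.cos (-Real.sin θ) θ := Real.hasDerivAt_cos θ
    have h2 : HasDerivAt (fun θ => Real.cos θ ^ 2 + κ ^ 2)
        (2 * Real.cos θ * (-Real.sin θ)) θ := by
      simpa [mul_comm, mul_assoc, mul_left_comm] using (h1.pow 2).add_const (κ ^ 2)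
    have h3 : HasDerivAt (fun θ => Real.sqrt (Real.cos θ ^ 2 + κ ^ 2))
        ((2 * Real.cos θ * (-Real.sin θ)) / (2 * Real.sqrt (Real.cos θ ^ 2 + κ ^ 2))) θ := by
      have := (Real.hasDerivAt_sqrt (ne_of_gt (hpos θ))).comp θ h2
      simpa [Function.comp_def, div_eq_mul_inv, mul_comm, mul_assoc, mul_left_comm] using this
    have hD := (((h1.mul h3).div_const 2).neg.sub ((h1.pow 2).div_const 2))
    refine hD.congr_deriv ?_
    have hs0 : Real.sqrt (Real.cos θ ^ 2 + κ ^ 2) ≠ 0 :=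
      ne_of_gt (Real.sqrt_pos.mpr (hpos θ))
    have hs : Real.sqrt (Real.cos θ ^ 2 + κ ^ 2) ^ 2 = Real.cos θ ^ 2 + κ ^ 2 :=
      Real.sq_sqrt (le_of_lt (hpos θ))
    field_simp
    push_cast [Nat.add_one_sub_one, pow_one]
    nlinarith [hs, Real.sqrt_nonneg (Real.cos θ ^ 2 + κ ^ 2)]
  have hcont : Continuous fun θ : ℝ =>
      Real.sin θ * (Real.cos θ + Real.sqrt (Real.cos θ ^ 2 + κ ^ 2)) ^ 2
        / (2 * Real.sqrt (Real.cos θ ^ 2 + κ ^ 2)) := by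
    apply Continuous.div
    · continuity
    · continuity
    · intro θ
      have := Real.sqrt_pos.mpr (hpos θ)
      positivity
  have hint : (∫ θ in (0:ℝ)..(Real.pi / 2),
      Real.sin θ * (Real.cos θ + Real.sqrt (Real.cos θ ^ 2 + κ ^ 2)) ^ 2
        / (2 * Real.sqrt (Real.cos θ ^ 2 + κ ^ 2)))
      = F (Real.pi / 2) - F 0 :=
    intervalIntegral.integral_eq_sub_of_hasDerivAt hderiv (hcont.intervalIntegrable _ _)
  have hval : F (Real.pi / 2) - F 0 = (1 + Real.sqrt (1 + κ ^ 2)) / 2 := by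
    simp only [hF, Real.cos_pi_div_two, Real.cos_zero]
    norm_num
    ring
  have hmain : (∫ θ in (0:ℝ)..(Real.pi / 2),
      Real.sin θ * (Real.cos θ + Real.sqrt (Real.cos θ ^ 2 + κ ^ 2)) ^ 2
        / (2 * Real.sqrt (Real.cos θ ^ 2 + κ ^ 2)))
      = (1 + Real.sqrt (1 + κ ^ 2)) / 2 := hint.trans hval
  refine ⟨hmain, ?_⟩
  intro r hr0 hr1 hκr
  rw [hmain]
  have h1r : (0:ℝ) < 1 - r ^ 2 := by nlinarith
  have hsq : 1 + κ ^ 2 = ((1 + r ^ 2) / (1 - r ^ 2)) ^ 2 := by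
    rw [hκr]; field_simp; ring
  rw [hsq, Real.sqrt_sq (by positivity)]
  field_simp
  ring
end

section
/- Let m > 1/2, κ ≥ 0, and θ ∈ (0, π). Then sin θ · (cos θ + √(cos²θ + κ²)) = m if and only if cot²θ − (2/m)·cot θ + 1 − κ²/m² = 0. -/
theorem stmt_9 (m : ℝ) (hm : 1 / 2 < m) (κ : ℝ) (hκ : 0 ≤ κ)
    (θ : ℝ) (hθ : θ ∈ Set.Ioo 0 Real.pi) :
    Real.sin θ * (Real.cos θ + Real.sqrt (Real.cos θ ^ 2 + κ ^ 2)) = m ↔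
      Real.cot θ ^ 2 - (2 / m) * Real.cot θ + 1 - κ ^ 2 / m ^ 2 = 0 := by
  obtain ⟨h1, h2⟩ := hθ
  have hs : 0 < Real.sin θ := Real.sin_pos_of_pos_of_lt_pi h1 h2
  have hpyth := Real.sin_sq_add_cos_sq θ
  set s := Real.sin θ with hsdef
  set c := Real.cos θ with hcdef
  have hcot : Real.cot θ = c / s := Real.cot_eq_cos_div_sin θ
  have hsc : s * c < m := by nlinarith [sq_nonneg (s - c)]
  have hmpos : (0:ℝ) < m := by linarith
  have hm0 : m ≠ 0 := ne_of_gt hmpos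
  have hs0 : s ≠ 0 := ne_of_gt hs
  have hsqrt : Real.sqrt (c ^ 2 + κ ^ 2) ^ 2 = c ^ 2 + κ ^ 2 :=
    Real.sq_sqrt (by positivity)
  have hsqnn : 0 ≤ Real.sqrt (c ^ 2 + κ ^ 2) := Real.sqrt_nonneg _
  rw [hcot]
  constructor
  · intro h
    have e1 : s * Real.sqrt (c ^ 2 + κ ^ 2) = m - s * c := by linear_combination h
    have e2 : (s * Real.sqrt (c ^ 2 + κ ^ 2)) ^ 2 = (m - s * c) ^ 2 := by rw [e1]
    have key2 : κ ^ 2 * s ^ 2 = m ^ 2 - 2 * m * s * c := by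
      linear_combination e2 - s ^ 2 * hsqrt
    field_simp
    linear_combination m ^ 2 * hpyth - key2
  · intro h
    field_simp at h
    have hκ2 : κ ^ 2 * s ^ 2 = m ^ 2 - 2 * m * s * c :=
      mul_left_cancel₀ (mul_ne_zero hm0 hs0)
        (by linear_combination (-(m * s)) * h + m ^ 3 * s * hpyth)
    have h2' : m / s - c = (m - s * c) / s := by field_simp
    have heq : c ^ 2 + κ ^ 2 = (m / s - c) ^ 2 := by
      rw [h2', div_pow, eq_div_iff (pow_ne_zero 2 hs0)]
      linear_combination hκ2
    have hge : c ≤ m / s := by rw [le_div_iff₀ hs]; nlinarith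
    have hsq : Real.sqrt (c ^ 2 + κ ^ 2) = m / s - c := by
      rw [heq, Real.sqrt_sq_eq_abs, abs_of_nonneg (sub_nonneg.mpr hge)]
    rw [hsq, h2']
    field_simp
    ring
end

section
/- Let m > 1/2 and κ ≥ 0 with κ² > m² − 1, and set x_± = (1 ± √(κ² − m² + 1))/m. Then for every θ ∈ (0, π) with x_− < cot θ < x_+, the strict inequality sin θ · (cos θ + √(cos²θ + κ²)) > m holds. -/
theorem stmt_11 (m : ℝ) (hm : 1 / 2 < m) (κ : ℝ) (hκ : 0 ≤ κ)
    (hκm : m ^ 2 - 1 < κ ^ 2) (θ : ℝ) (hθ : θ ∈ Set.Ioo 0 Real.pi)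
    (h₁ : (1 - Real.sqrt (κ ^ 2 - m ^ 2 + 1)) / m < Real.cot θ)
    (h₂ : Real.cot θ < (1 + Real.sqrt (κ ^ 2 - m ^ 2 + 1)) / m) :
    m < Real.sin θ * (Real.cos θ + Real.sqrt (Real.cos θ ^ 2 + κ ^ 2)) := by
  obtain ⟨hθ0, hθπ⟩ := hθ
  have hs : 0 < Real.sin θ := Real.sin_pos_of_pos_of_lt_pi hθ0 hθπ
  set s := Real.sin θ with hsdef
  set c := Real.cos θ with hcdef
  have hm0 : (0:ℝ) < m := by linarith
  have hpy : s ^ 2 + c ^ 2 = 1 := Real.sin_sq_add_cos_sq θ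
  have hD : 0 ≤ κ ^ 2 - m ^ 2 + 1 := by linarith
  have hDsq : Real.sqrt (κ ^ 2 - m ^ 2 + 1) ^ 2 = κ ^ 2 - m ^ 2 + 1 :=
    Real.sq_sqrt hD
  have hcot : Real.cot θ = c / s := Real.cot_eq_cos_div_sin θ
  -- multiply out h₁, h₂
  have h₁' : (1 - Real.sqrt (κ ^ 2 - m ^ 2 + 1)) * s < m * c := by
    have := (div_lt_div_iff₀ hm0 hs).mp (by rw [hcot] at h₁; exact h₁)
    linarith
  have h₂' : m * c < (1 + Real.sqrt (κ ^ 2 - m ^ 2 + 1)) * s := by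
    have := (div_lt_div_iff₀ hs hm0).mp (by rw [hcot] at h₂; exact h₂)
    linarith
  -- key quadratic inequality: (m*c - s)^2 < (κ²-m²+1) s²
  have hquad : (m * c - s) ^ 2 < (κ ^ 2 - m ^ 2 + 1) * s ^ 2 := by
    nlinarith [sq_nonneg (m * c - s), hs.le, mul_pos hs hs]
  -- hence s²κ² + 2 m s c > m²
  have hkey : m ^ 2 < s ^ 2 * κ ^ 2 + 2 * m * s * c := by nlinarith
  -- sin θ cos θ ≤ 1/2
  have hsc : s * c ≤ 1 / 2 := by nlinarith [sq_nonneg (s - c)]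
  have hrad : 0 ≤ c ^ 2 + κ ^ 2 := by positivity
  have hsq : Real.sqrt (c ^ 2 + κ ^ 2) ^ 2 = c ^ 2 + κ ^ 2 := Real.sq_sqrt hrad
  have hsqrt0 : 0 ≤ Real.sqrt (c ^ 2 + κ ^ 2) := Real.sqrt_nonneg _
  have hms : 0 < m - s * c := by linarith
  nlinarith [mul_pos hs hs, mul_nonneg hs.le hsqrt0,
    sq_nonneg (s * Real.sqrt (c ^ 2 + κ ^ 2) - (m - s * c)),
    sq_nonneg (s * Real.sqrt (c ^ 2 + κ ^ 2) + (m - s * c))]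
end

section
/- Let m > 1/2, κ ≥ 0, and θ ∈ (0, π). If sin θ · (cos θ + √(cos²θ + κ²)) > m, then (m² + κ²·sin²θ) / (2·(m − sin θ·cos θ)) > m. (The denominator is positive since m > 1/2.) -/
theorem stmt_12 (m : ℝ) (hm : 1 / 2 < m) (κ : ℝ) (hκ : 0 ≤ κ)
    (θ : ℝ) (hθ : θ ∈ Set.Ioo 0 Real.pi)
    (h : m < Real.sin θ * (Real.cos θ + Real.sqrt (Real.cos θ ^ 2 + κ ^ 2))) :
    m < (m ^ 2 + κ ^ 2 * Real.sin θ ^ 2) / (2 * (m - Real.sin θ * Real.cos θ)) := by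
  obtain ⟨h0, hpi⟩ := hθ
  have hs : 0 < Real.sin θ := Real.sin_pos_of_pos_of_lt_pi h0 hpi
  have hsc : Real.sin θ * Real.cos θ ≤ 1 / 2 := by
    have := Real.sin_two_mul θ ▸ Real.sin_le_one (2 * θ)
    nlinarith [Real.sin_le_one (2 * θ), Real.sin_two_mul θ]
  have hD : 0 < 2 * (m - Real.sin θ * Real.cos θ) := by linarith
  have hnn : (0:ℝ) ≤ Real.cos θ ^ 2 + κ ^ 2 := by positivity
  have hsq : Real.sqrt (Real.cos θ ^ 2 + κ ^ 2) ^ 2 = Real.cos θ ^ 2 + κ ^ 2 :=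
    Real.sq_sqrt hnn
  have hkey : m - Real.sin θ * Real.cos θ < Real.sin θ * Real.sqrt (Real.cos θ ^ 2 + κ ^ 2) := by
    nlinarith
  have hsqr : (m - Real.sin θ * Real.cos θ) ^ 2 <
      Real.sin θ ^ 2 * (Real.cos θ ^ 2 + κ ^ 2) := by
    have hpos : 0 ≤ m - Real.sin θ * Real.cos θ := by linarith
    nlinarith [Real.sqrt_nonneg (Real.cos θ ^ 2 + κ ^ 2)]
  rw [lt_div_iff₀ hD]
  nlinarith
end

section
/- Let m > 1/2 and κ ≥ 0. The function λ(θ) = (m² + κ²·sin²θ) / (2·(m − sin θ·cos θ)) is differentiable on ℝ and satisfies, for all θ, the identity λ′(θ) · (m − sin θ·cos θ) = λ(θ)·cos 2θ + (κ²/2)·sin 2θ. (That is, along the bang flow θ̇ = m − sin θ cos θ, λ satisfies the adjoint equation λ̇ = λ cos 2θ + λ_a sin 2θ with λ_a = κ²/2.) -/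
open Real

lemma aux_pos (m : ℝ) (hm : 1 / 2 < m) (θ : ℝ) :
    0 < m - Real.sin θ * Real.cos θ := by
  have h : Real.sin θ * Real.cos θ = Real.sin (2 * θ) / 2 := by
    rw [Real.sin_two_mul]; ring
  have := Real.sin_le_one (2 * θ)
  rw [h]; linarith

lemma aux_hd (m κ : ℝ) (θ : ℝ) (hne : 2 * (m - Real.sin θ * Real.cos θ) ≠ 0) :
    HasDerivAt (fun θ : ℝ => (m ^ 2 + κ ^ 2 * Real.sin θ ^ 2)
        / (2 * (m - Real.sin θ * Real.cos θ)))
      ((κ ^ 2 * (2 * Real.sin θ * Real.cos θ) * (2 * (m - Real.sin θ * Real.cos θ))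
        - (m ^ 2 + κ ^ 2 * Real.sin θ ^ 2)
          * (2 * (-(Real.cos θ * Real.cos θ - Real.sin θ * Real.sin θ))))
        / (2 * (m - Real.sin θ * Real.cos θ)) ^ 2) θ := by
  have hN : HasDerivAt (fun θ : ℝ => m ^ 2 + κ ^ 2 * Real.sin θ ^ 2)
      (κ ^ 2 * (2 * Real.sin θ * Real.cos θ)) θ := by
    have h1 : HasDerivAt (fun θ : ℝ => Real.sin θ ^ 2)
        (2 * Real.sin θ * Real.cos θ) θ := by
      have := (Real.hasDerivAt_sin θ).fun_pow 2
      simpa [mul_comm, mul_assoc, mul_left_comm] using this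
    simpa using (h1.const_mul (κ ^ 2)).const_add (m ^ 2)
  have hD : HasDerivAt (fun θ : ℝ => 2 * (m - Real.sin θ * Real.cos θ))
      (2 * (-(Real.cos θ * Real.cos θ - Real.sin θ * Real.sin θ))) θ := by
    have h2 : HasDerivAt (fun θ : ℝ => Real.sin θ * Real.cos θ)
        (Real.cos θ * Real.cos θ - Real.sin θ * Real.sin θ) θ := by
      have := (Real.hasDerivAt_sin θ).fun_mul (Real.hasDerivAt_cos θ)
      simpa [mul_comm, sub_eq_add_neg] using this
    have := ((hasDerivAt_const θ m).sub h2).const_mul 2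
    simpa using this
  exact hN.div hD hne

theorem stmt_14 (m : ℝ) (hm : 1 / 2 < m) (κ : ℝ) (hκ : 0 ≤ κ) :
    Differentiable ℝ
      (fun θ : ℝ => (m ^ 2 + κ ^ 2 * Real.sin θ ^ 2)
        / (2 * (m - Real.sin θ * Real.cos θ))) ∧
    ∀ θ : ℝ,
      deriv (fun θ : ℝ => (m ^ 2 + κ ^ 2 * Real.sin θ ^ 2)
          / (2 * (m - Real.sin θ * Real.cos θ))) θ
        * (m - Real.sin θ * Real.cos θ)
      = (m ^ 2 + κ ^ 2 * Real.sin θ ^ 2) / (2 * (m - Real.sin θ * Real.cos θ))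
          * Real.cos (2 * θ)
        + κ ^ 2 / 2 * Real.sin (2 * θ) := by
  have hne : ∀ θ : ℝ, 2 * (m - Real.sin θ * Real.cos θ) ≠ 0 := fun θ => by
    have := aux_pos m hm θ; positivity
  constructor
  · intro θ
    exact (aux_hd m κ θ (hne θ)).differentiableAt
  · intro θ
    rw [(aux_hd m κ θ (hne θ)).deriv]
    have h0 : m - Real.sin θ * Real.cos θ ≠ 0 := (aux_pos m hm θ).ne'
    rw [Real.cos_two_mul', Real.sin_two_mul]
    field_simp
    ring
end

section
/- Let m > 1/2, set s = √(4m² − 1), fix θ₁ ∈ (0, π), and define on (0, π) the function g(θ) = √((2m − sin 2θ₁)/(2m − sin 2θ)) · exp( −(1/s)·[ arccot((2m·cot θ − 1)/s) − arccot((2m·cot θ₁ − 1)/s) ] ), where arccot : ℝ → (0, π) is the inverse of cot restricted to (0, π). Then g(θ₁) = 1 and, for all θ ∈ (0, π), g′(θ)/g(θ) = −sin²θ / (m − sin θ·cos θ). -/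
/-- `arccot : ℝ → (0, π)`, the inverse of `cot` restricted to `(0, π)`. -/
noncomputable def arccot (x : ℝ) : ℝ := Real.pi / 2 - Real.arctan x

lemma hasDerivAt_cot_aux {x : ℝ} (h : Real.sin x ≠ 0) :
    HasDerivAt Real.cot (-(1 / Real.sin x ^ 2)) x := by
  have hd := (Real.hasDerivAt_cos x).div (Real.hasDerivAt_sin x) h
  have hfun : Real.cot = fun y => Real.cos y / Real.sin y :=
    funext fun y => Real.cot_eq_cos_div_sin y
  rw [hfun]
  refine hd.congr_deriv ?_
  have hsc := Real.sin_sq_add_cos_sq x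
  have h1 : -Real.sin x * Real.sin x - Real.cos x * Real.cos x = -1 := by nlinarith [hsc]
  rw [h1]
  ring

theorem stmt_15 (m : ℝ) (hm : 1 / 2 < m) (θ₁ : ℝ) (hθ₁ : θ₁ ∈ Set.Ioo 0 Real.pi)
    (s : ℝ) (hs : s = Real.sqrt (4 * m ^ 2 - 1))
    (g : ℝ → ℝ)
    (hg : ∀ θ : ℝ, g θ =
      Real.sqrt ((2 * m - Real.sin (2 * θ₁)) / (2 * m - Real.sin (2 * θ)))
        * Real.exp (-(1 / s) *
            (arccot ((2 * m * Real.cot θ - 1) / s)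
              - arccot ((2 * m * Real.cot θ₁ - 1) / s)))) :
    g θ₁ = 1 ∧
    ∀ θ ∈ Set.Ioo 0 Real.pi,
      deriv g θ / g θ = -Real.sin θ ^ 2 / (m - Real.sin θ * Real.cos θ) := by
  have hD : ∀ x : ℝ, 0 < 2 * m - Real.sin (2 * x) := fun x => by
    have := Real.sin_le_one (2 * x); linarith
  have hP : ∀ x : ℝ, 0 < m - Real.sin x * Real.cos x := fun x => by
    have h1 := Real.sin_le_one (2 * x)
    have h2 := Real.sin_two_mul x
    nlinarith
  have hs0 : 0 < s := by
    rw [hs]; apply Real.sqrt_pos.2; nlinarith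
  have hs2 : s ^ 2 = 4 * m ^ 2 - 1 := by
    rw [hs]; exact Real.sq_sqrt (by nlinarith)
  constructor
  · rw [hg θ₁, div_self (hD θ₁).ne', Real.sqrt_one, sub_self, mul_zero, Real.exp_zero, mul_one]
  · intro θ hθ
    have hsθ : 0 < Real.sin θ := Real.sin_pos_of_pos_of_lt_pi hθ.1 hθ.2
    have hsne : Real.sin θ ≠ 0 := hsθ.ne'
    set A : ℝ := 2 * m - Real.sin (2 * θ₁) with hA_def
    set c : ℝ := arccot ((2 * m * Real.cot θ₁ - 1) / s) with hc_def
    have hA : 0 < A := hD θ₁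
    have hDθ : 0 < 2 * m - Real.sin (2 * θ) := hD θ
    -- derivative of inner D
    have h2x : HasDerivAt (fun x : ℝ => 2 * x) 2 θ := by
      simpa using (hasDerivAt_id θ).const_mul (2 : ℝ)
    have hDder : HasDerivAt (fun x => 2 * m - Real.sin (2 * x)) (-(Real.cos (2 * θ) * 2)) θ := by
      have := (hasDerivAt_const θ (2 * m)).sub ((Real.hasDerivAt_sin (2 * θ)).comp θ h2x)
      exact this.congr_deriv (by ring)
    have hfrac : HasDerivAt (fun x => A / (2 * m - Real.sin (2 * x)))
        ((0 * (2 * m - Real.sin (2 * θ)) - A * (-(Real.cos (2 * θ) * 2))) /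
          (2 * m - Real.sin (2 * θ)) ^ 2) θ :=
      (hasDerivAt_const θ A).div hDder hDθ.ne'
    have hfracpos : 0 < A / (2 * m - Real.sin (2 * θ)) := div_pos hA hDθ
    have hsqrt : HasDerivAt (fun x => Real.sqrt (A / (2 * m - Real.sin (2 * x))))
        (((0 * (2 * m - Real.sin (2 * θ)) - A * (-(Real.cos (2 * θ) * 2))) /
          (2 * m - Real.sin (2 * θ)) ^ 2) /
          (2 * Real.sqrt (A / (2 * m - Real.sin (2 * θ))))) θ :=
      hfrac.sqrt hfracpos.ne'
    -- derivative of exponential part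
    have hcot : HasDerivAt Real.cot (-(1 / Real.sin θ ^ 2)) θ := hasDerivAt_cot_aux hsne
    have hu : HasDerivAt (fun x => (2 * m * Real.cot x - 1) / s)
        ((2 * m * -(1 / Real.sin θ ^ 2)) / s) θ :=
      ((hcot.const_mul (2 * m)).sub_const 1).div_const s
    have harctan : HasDerivAt (fun x => Real.arctan ((2 * m * Real.cot x - 1) / s))
        (1 / (1 + ((2 * m * Real.cot θ - 1) / s) ^ 2) * ((2 * m * -(1 / Real.sin θ ^ 2)) / s)) θ :=
      (Real.hasDerivAt_arctan _).comp θ hu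
    have harccot : HasDerivAt (fun x => arccot ((2 * m * Real.cot x - 1) / s))
        (-(1 / (1 + ((2 * m * Real.cot θ - 1) / s) ^ 2) *
          ((2 * m * -(1 / Real.sin θ ^ 2)) / s))) θ := by
      simp only [arccot]
      exact harctan.const_sub (Real.pi / 2)
    have hexp : HasDerivAt
        (fun x => Real.exp (-(1 / s) * (arccot ((2 * m * Real.cot x - 1) / s) - c)))
        (Real.exp (-(1 / s) * (arccot ((2 * m * Real.cot θ - 1) / s) - c)) *
          (-(1 / s) * (-(1 / (1 + ((2 * m * Real.cot θ - 1) / s) ^ 2) *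
            ((2 * m * -(1 / Real.sin θ ^ 2)) / s))))) θ :=
      ((harccot.sub_const c).const_mul (-(1 / s))).exp
    have hG := hsqrt.mul hexp
    have hgfun : g = fun x => Real.sqrt (A / (2 * m - Real.sin (2 * x))) *
        Real.exp (-(1 / s) * (arccot ((2 * m * Real.cot x - 1) / s) - c)) := funext hg
    rw [hgfun]
    erw [hG.deriv]
    -- abbreviations
    set q : ℝ := Real.sqrt (A / (2 * m - Real.sin (2 * θ))) with hq_def
    set E : ℝ := Real.exp (-(1 / s) * (arccot ((2 * m * Real.cot θ - 1) / s) - c)) with hE_def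
    have hqpos : 0 < q := Real.sqrt_pos.2 hfracpos
    have hEpos : 0 < E := Real.exp_pos _
    have hqq : q * q = A / (2 * m - Real.sin (2 * θ)) := Real.mul_self_sqrt hfracpos.le
    have hPθ : 0 < m - Real.sin θ * Real.cos θ := hP θ
    -- log derivative of sqrt part
    have h1 : ((0 * (2 * m - Real.sin (2 * θ)) - A * (-(Real.cos (2 * θ) * 2))) /
          (2 * m - Real.sin (2 * θ)) ^ 2) / (2 * q) / q
        = Real.cos (2 * θ) / (2 * m - Real.sin (2 * θ)) := by
      rw [div_div, mul_assoc, hqq]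
      field_simp
      ring
    -- log derivative of exp part
    have h2 : (-(1 / s) * (-(1 / (1 + ((2 * m * Real.cot θ - 1) / s) ^ 2) *
          ((2 * m * -(1 / Real.sin θ ^ 2)) / s))))
        = -(1 / (2 * (m - Real.sin θ * Real.cos θ))) := by
      rw [Real.cot_eq_cos_div_sin]
      have h1u : 1 + ((2 * m * (Real.cos θ / Real.sin θ) - 1) / s) ^ 2
          = 4 * m * (m - Real.sin θ * Real.cos θ) / (s ^ 2 * Real.sin θ ^ 2) := by
        have hsc := Real.sin_sq_add_cos_sq θ
        field_simp
        linear_combination (Real.sin θ ^ 2) * hs2 + (4 * m ^ 2) * hsc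
      rw [h1u]
      have hm0 : (0:ℝ) < m := by linarith
      field_simp
      ring
    -- combine
    have hcomb : (((0 * (2 * m - Real.sin (2 * θ)) - A * (-(Real.cos (2 * θ) * 2))) /
          (2 * m - Real.sin (2 * θ)) ^ 2) /
          (2 * q) * E +
        q * (E * (-(1 / s) * (-(1 / (1 + ((2 * m * Real.cot θ - 1) / s) ^ 2) *
            ((2 * m * -(1 / Real.sin θ ^ 2)) / s)))))) / (q * E)
        = ((0 * (2 * m - Real.sin (2 * θ)) - A * (-(Real.cos (2 * θ) * 2))) /
          (2 * m - Real.sin (2 * θ)) ^ 2) / (2 * q) / q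
          + (-(1 / s) * (-(1 / (1 + ((2 * m * Real.cot θ - 1) / s) ^ 2) *
            ((2 * m * -(1 / Real.sin θ ^ 2)) / s)))) := by
      field_simp
    rw [hcomb, h1, h2]
    have hsin2 : Real.sin (2 * θ) = 2 * (Real.sin θ * Real.cos θ) := by
      rw [Real.sin_two_mul]; ring
    have h2P : 2 * m - 2 * (Real.sin θ * Real.cos θ) = 2 * (m - Real.sin θ * Real.cos θ) := by
      ring
    rw [hsin2, Real.cos_two_mul', h2P]
    have hsc := Real.sin_sq_add_cos_sq θ
    have hinv : 2 * (2 * m - 2 * (Real.sin θ * Real.cos θ))⁻¹ = (m - Real.sin θ * Real.cos θ)⁻¹ := by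
      rw [h2P, mul_inv, ← mul_assoc, mul_inv_cancel₀ (two_ne_zero : (2:ℝ) ≠ 0), one_mul]
    linear_combination (1 / (2 * (m - Real.sin θ * Real.cos θ))) * hsc - Real.sin θ ^ 2 * hinv
end
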